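/- arXiv:1612.03759 — 2 statements merged into one kernel-verified Lean document; each statement's English description precedes it below -/
import Mathlib

section
/- For every integer n ≥ 2, the number of triples (A, s, i), where A is a rooted plane tree with n vertices, s is a non-root vertex of A, and i is an integer with 1 ≤ i ≤ 2·depth(s) − 1 (depth(s) being the distance from the root to s), equals 4^(n−1) − binomial(2n−1, n−1). Equivalently, the sum over all rooted plane trees A with n vertices and over all non-root vertices s of A of (2·depth(s) − 1) equals 4^(n−1) − binomial(2n−1, n−1). -/
inductive PlaneTree : Type
  | node : List PlaneTree → PlaneTree

namespace PlaneTree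

def vertices : PlaneTree → List (List ℕ)
  | node cs =>
    [] :: (((List.range cs.attach.length).zip cs.attach).map
      (fun x => (vertices x.2.1).map (fun p => x.1 :: p))).flatten
decreasing_by
  have h1 := List.sizeOf_lt_of_mem x.2.2
  simp only [PlaneTree.node.sizeOf_spec]
  omega

instance decEq : DecidableEq PlaneTree
  | node as, node bs =>
    match decEqList as bs with
    | isTrue h => isTrue (by rw [h])
    | isFalse h => isFalse (fun c => by injection c; contradiction)
where decEqList : (as bs : List PlaneTree) → Decidable (as = bs)
  | [], [] => isTrue rfl
  | _ :: _, [] => isFalse (by simp)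
  | [], _ :: _ => isFalse (by simp)
  | a :: as, b :: bs =>
    match decEq a b, decEqList as bs with
    | isTrue h1, isTrue h2 => isTrue (by rw [h1, h2])
    | isFalse h1, _ => isFalse (by simp [h1])
    | _, isFalse h2 => isFalse (by simp [h2])

def sz : PlaneTree → ℕ
  | node cs => 1 + (cs.attach.map (fun x => sz x.1)).sum
decreasing_by
  have h1 := List.sizeOf_lt_of_mem x.2
  simp only [PlaneTree.node.sizeOf_spec]; omega

def w : PlaneTree → ℕ
  | node cs => (cs.attach.map (fun x => w x.1 + 2 * sz x.1 - 1)).sum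
decreasing_by
  have h1 := List.sizeOf_lt_of_mem x.2
  simp only [PlaneTree.node.sizeOf_spec]; omega

theorem sz_node (cs : List PlaneTree) : sz (node cs) = 1 + (cs.map sz).sum := by
  rw [sz, List.attach_map_val]

theorem w_node (cs : List PlaneTree) :
    w (node cs) = (cs.map (fun t => w t + 2 * sz t - 1)).sum := by
  rw [w, List.attach_map_val (l := cs) (f := fun t => w t + 2 * sz t - 1)]

theorem strongInd {P : PlaneTree → Prop}
    (h : ∀ cs, (∀ t ∈ cs, P t) → P (node cs)) : ∀ t, P t
  | node cs => h cs (fun t ht => strongInd h t)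
decreasing_by
  have h1 := List.sizeOf_lt_of_mem ht
  simp only [PlaneTree.node.sizeOf_spec]; omega

theorem sz_pos (t : PlaneTree) : 0 < sz t := by
  obtain ⟨cs⟩ := t; rw [sz_node]; omega

/-- Key helper for proving facts about sums over vertices of a node. -/
theorem sum_map_vertices (cs : List PlaneTree) (g g' : List ℕ → ℕ)
    (hg : ∀ i p, g (i :: p) = g' p) :
    ((vertices (node cs)).map g).sum
      = g [] + (cs.map (fun t => ((vertices t).map g').sum)).sum := by
  rw [vertices]
  rw [List.map_cons, List.sum_cons]
  congr 1
  rw [List.map_flatten, List.sum_flatten, List.map_map, List.map_map]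
  have : ((List.sum ∘ List.map g) ∘ fun x : ℕ × {t // t ∈ cs} =>
        (vertices x.2.1).map (fun p => x.1 :: p))
      = (fun t : {t // t ∈ cs} => ((vertices t.1).map g').sum) ∘ Prod.snd := by
    funext x
    simp only [Function.comp_apply, List.map_map]
    congr 1
    apply List.map_congr_left
    intro p _
    exact hg x.1 p
  rw [this, ← List.map_map, List.map_snd_zip (l₁ := List.range cs.attach.length) (l₂ := cs.attach) (by simp)]
  rw [List.attach_map_val (l := cs) (f := fun t => ((vertices t).map g').sum)]

theorem length_vertices (t : PlaneTree) : (vertices t).length = sz t := by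
  induction t using strongInd with
  | h cs ih =>
    have := sum_map_vertices cs (fun _ => 1) (fun _ => 1) (fun _ _ => rfl)
    have hlen : ∀ (l : List (List ℕ)), (l.map (fun _ => 1)).sum = l.length := by
      intro l; induction l with
      | nil => rfl
      | cons a l ihl => simp [ihl, Nat.add_comm]
    rw [hlen] at this
    rw [this, sz_node]
    congr 1
    apply congrArg List.sum
    apply List.map_congr_left
    intro t ht
    rw [← ih t ht, hlen]

theorem sum_map_add_const {α : Type*} (l : List α) (f : α → ℕ) (c : ℕ) :
    (l.map (fun a => f a + c)).sum = (l.map f).sum + c * l.length := by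
  induction l with
  | nil => simp
  | cons a l ih => simp [ih]; ring

theorem sum_map_add {α : Type*} (l : List α) (f g : α → ℕ) :
    (l.map (fun a => f a + g a)).sum = (l.map f).sum + (l.map g).sum := by
  induction l with
  | nil => simp
  | cons a l ih => simp [ih]; ring

theorem sum_map_two_mul (l : List PlaneTree) :
    (l.map (fun t => 2 * sz t)).sum = 2 * (l.map sz).sum := by
  induction l with
  | nil => simp
  | cons a l ihl => simp [ihl]; ring

theorem dsum_eq (t : PlaneTree) :
    ((vertices t).map (fun p => 2 * p.length + 1)).sum = w t + 2 * sz t - 1 := by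
  induction t using strongInd with
  | h cs ih =>
    rw [sum_map_vertices cs _ (fun p => (2 * p.length + 1) + 2)
      (by intro i p; simp; ring)]
    have : (cs.map (fun t => ((vertices t).map (fun p => 2 * p.length + 1 + 2)).sum))
        = cs.map (fun t => (w t + 2 * sz t - 1) + 2 * sz t) := by
      apply List.map_congr_left
      intro t ht
      rw [sum_map_add_const (vertices t) (fun p => 2 * p.length + 1) 2,
        length_vertices, ih t ht]
    rw [this, w_node, sz_node]
    have h2 : (cs.map (fun t => w t + 2 * sz t - 1 + 2 * sz t)).sum
        = (cs.map (fun t => w t + 2 * sz t - 1)).sum + (cs.map (fun t => 2 * sz t)).sum := by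
      rw [← sum_map_add]
    rw [h2]
    rw [sum_map_two_mul]
    simp only [List.length_nil, Nat.mul_zero, Nat.zero_add]
    omega

theorem wsum_eq (t : PlaneTree) :
    ((vertices t).map (fun p => if p = [] then 0 else 2 * p.length - 1)).sum = w t := by
  obtain ⟨cs⟩ := t
  rw [sum_map_vertices cs _ (fun p => 2 * p.length + 1)
    (by intro i p; simp; omega)]
  have h0 : (if ([]:List ℕ) = [] then 0 else 2 * ([]:List ℕ).length - 1) = 0 := rfl
  rw [h0, Nat.zero_add, w_node]
  apply congrArg List.sum
  apply List.map_congr_left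
  intro t _
  exact dsum_eq t

theorem nil_mem_vertices (t : PlaneTree) : [] ∈ vertices t := by
  obtain ⟨cs⟩ := t; rw [vertices]; exact List.mem_cons_self

theorem nodup_vertices (t : PlaneTree) : (vertices t).Nodup := by
  induction t using strongInd with
  | h cs ih =>
    rw [vertices]
    refine List.Nodup.cons ?_ ?_
    · intro hmem
      rw [List.mem_flatten] at hmem
      obtain ⟨l, hl, hnil⟩ := hmem
      rw [List.mem_map] at hl
      obtain ⟨x, _, rfl⟩ := hl
      rw [List.mem_map] at hnil
      obtain ⟨p, _, hp⟩ := hnil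
      exact List.cons_ne_nil _ _ hp
    · rw [List.nodup_flatten]
      constructor
      · intro l hl
        rw [List.mem_map] at hl
        obtain ⟨x, hx, rfl⟩ := hl
        refine List.Nodup.map ?_ (ih x.2.1 x.2.2)
        intro p q h
        exact List.tail_eq_of_cons_eq h
      · rw [List.pairwise_map]
        have hfst : List.Pairwise (fun a b : ℕ × {t // t ∈ cs} => a.1 ≠ b.1)
            ((List.range cs.attach.length).zip cs.attach) := by
          rw [← List.pairwise_map (f := Prod.fst)]
          rw [List.map_fst_zip (l₁ := List.range cs.attach.length) (l₂ := cs.attach) (by simp)]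
          exact List.nodup_range
        refine hfst.imp ?_
        intro a b hab
        intro q hqa hqb
        rw [List.mem_map] at hqa hqb
        obtain ⟨p, _, rfl⟩ := hqa
        obtain ⟨p', _, hp'⟩ := hqb
        apply hab
        have h1 := congrArg List.headI hp'
        simpa using h1.symm

/-- All forests (lists of plane trees) with total number of vertices `n`. -/
def forests : ℕ → Finset (List PlaneTree)
  | 0 => {[]}
  | n+1 => (Finset.range (n+1)).attach.biUnion (fun k =>
      (((forests k.1).image node) ×ˢ forests (n - k.1)).image (fun p => p.1 :: p.2))
decreasing_by
  · have := Finset.mem_range.mp k.2; omega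
  · omega

theorem mem_forests : ∀ (n : ℕ) (f : List PlaneTree),
    f ∈ forests n ↔ (f.map sz).sum = n := by
  intro n
  induction n using Nat.strong_induction_on with
  | _ n ih =>
    cases n with
    | zero =>
      intro f
      rw [forests]
      simp only [Finset.mem_singleton]
      constructor
      · rintro rfl; simp
      · intro h
        cases f with
        | nil => rfl
        | cons t rest =>
          exfalso
          have := sz_pos t
          simp only [List.map_cons, List.sum_cons] at h
          omega
    | succ n =>
      intro f
      rw [forests]
      simp only [Finset.mem_biUnion, Finset.mem_attach, true_and, Finset.mem_image,
        Finset.mem_product, Subtype.exists, Finset.mem_range]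
      constructor
      · rintro ⟨k, hk, ⟨t, rest⟩, ⟨ht, hrest⟩, rfl⟩
        simp only at ht hrest ⊢
        obtain ⟨cs, hcs, rfl⟩ := ht
        have h1 : (cs.map sz).sum = k := (ih k (by omega) cs).mp hcs
        have h2 : (rest.map sz).sum = n - k := (ih (n - k) (by omega) rest).mp hrest
        simp only [List.map_cons, List.sum_cons, sz_node, h1, h2]
        omega
      · intro h
        cases f with
        | nil => simp at h
        | cons t rest =>
          obtain ⟨cs⟩ := t
          simp only [List.map_cons, List.sum_cons, sz_node] at h
          set k := (cs.map sz).sum with hk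
          have hkn : k ≤ n := by omega
          refine ⟨k, by omega, (node cs, rest), ⟨⟨cs, (ih k (by omega) cs).mpr rfl, rfl⟩, ?_⟩, rfl⟩
          exact (ih (n - k) (by omega) rest).mpr (by omega)

theorem sz_head_of_mem_image {k : ℕ} {t : PlaneTree}
    (ht : t ∈ (forests k).image node) : sz t = k + 1 := by
  obtain ⟨cs, hcs, rfl⟩ := Finset.mem_image.mp ht
  rw [sz_node, (mem_forests k cs).mp hcs, Nat.add_comm]

theorem sum_forests_succ {M : Type*} [AddCommMonoid M] (n : ℕ) (g : List PlaneTree → M) :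
    ∑ f ∈ forests (n+1), g f
      = ∑ k ∈ Finset.range (n+1), ∑ cs ∈ forests k, ∑ rest ∈ forests (n - k),
          g (node cs :: rest) := by
  rw [forests]
  rw [Finset.sum_biUnion]
  · rw [← Finset.sum_attach (Finset.range (n+1)) (fun k => ∑ cs ∈ forests k,
      ∑ rest ∈ forests (n - k), g (node cs :: rest))]
    apply Finset.sum_congr rfl
    intro k _
    rw [Finset.sum_image (by
      rintro ⟨a1, a2⟩ _ ⟨b1, b2⟩ _ h
      simp only [List.cons.injEq] at h
      exact Prod.ext h.1 h.2)]
    rw [Finset.sum_product]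
    rw [Finset.sum_image (by intro a _ b _ h; exact node.inj h)]
  · intro a ha b hb hab
    simp only [Function.onFun]
    rw [Finset.disjoint_left]
    rintro f hfa hfb
    simp only [Finset.mem_image, Finset.mem_product, Prod.exists] at hfa hfb
    obtain ⟨t, rest, ⟨ht, _⟩, rfl⟩ := hfa
    obtain ⟨t', rest', ⟨ht', _⟩, h⟩ := hfb
    have h1 : t' = t := (List.cons.injEq t' rest' t rest ▸ h).1
    apply hab
    apply Subtype.ext
    have e1 := sz_head_of_mem_image (Finset.mem_image.mpr ht)
    have e2 := sz_head_of_mem_image (Finset.mem_image.mpr ht')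
    rw [h1] at e2
    omega

theorem catalan_succ'' (n : ℕ) :
    catalan (n + 1) = ∑ k ∈ Finset.range (n + 1), catalan k * catalan (n - k) := by
  rw [catalan_succ' n, Finset.Nat.sum_antidiagonal_eq_sum_range_succ
    (fun x y => catalan x * catalan y) n]

theorem card_forests : ∀ n : ℕ, (forests n).card = catalan n := by
  intro n
  induction n using Nat.strong_induction_on with
  | _ n ih =>
    cases n with
    | zero => rw [forests]; simp
    | succ n =>
      have := sum_forests_succ n (fun _ => (1 : ℕ))
      simp only [Finset.sum_const, Nat.smul_one_eq_cast, Nat.cast_id] at this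
      rw [this, catalan_succ'']
      apply Finset.sum_congr rfl
      intro k hk
      rw [Finset.mem_range] at hk
      rw [smul_eq_mul, ih k (by omega), ih (n - k) (by omega)]

/-- Sum of `w t + 2·sz t − 1` over the trees of a forest -/
def wf (f : List PlaneTree) : ℕ := (f.map (fun t => w t + 2 * sz t - 1)).sum

/-- fS n = total statistic over all forests with n vertices -/
def fS (n : ℕ) : ℕ := ∑ f ∈ forests n, wf f

theorem fS_zero : fS 0 = 0 := by
  rw [fS, forests]; simp [wf]

theorem fS_succ (n : ℕ) : fS (n + 1)
    = ∑ k ∈ Finset.range (n + 1),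
        ((fS k + (2 * k + 1) * catalan k) * catalan (n - k) + catalan k * fS (n - k)) := by
  rw [fS, sum_forests_succ n wf]
  apply Finset.sum_congr rfl
  intro k hk
  rw [Finset.mem_range] at hk
  have hterm : ∀ cs ∈ forests k, ∀ rest ∈ forests (n - k),
      wf (node cs :: rest) = wf cs + (2 * k + 1) + wf rest := by
    intro cs hcs rest _
    have hsz : sz (node cs) = 1 + k := by
      rw [sz_node, (mem_forests k cs).mp hcs]
    have hw : w (node cs) = wf cs := w_node cs
    show (wf (node cs :: rest) : ℕ) = _
    rw [wf, List.map_cons, List.sum_cons, hw, hsz]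
    rw [show (rest.map (fun t => w t + 2 * sz t - 1)).sum = wf rest from rfl]
    omega
  calc ∑ cs ∈ forests k, ∑ rest ∈ forests (n - k), wf (node cs :: rest)
      = ∑ cs ∈ forests k, ∑ rest ∈ forests (n - k), (wf cs + (2 * k + 1) + wf rest) := by
        apply Finset.sum_congr rfl; intro cs hcs
        apply Finset.sum_congr rfl; intro rest hrest
        exact hterm cs hcs rest hrest
    _ = ∑ cs ∈ forests k, ((forests (n-k)).card * (wf cs + (2 * k + 1)) + fS (n - k)) := by
        apply Finset.sum_congr rfl; intro cs _
        rw [Finset.sum_add_distrib, Finset.sum_const, smul_eq_mul, fS]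
    _ = (fS k + (2 * k + 1) * catalan k) * catalan (n - k) + catalan k * fS (n - k) := by
        rw [Finset.sum_add_distrib, Finset.sum_const, smul_eq_mul, ← Finset.mul_sum,
          Finset.sum_add_distrib, Finset.sum_const, smul_eq_mul, card_forests, card_forests,
          ← fS]
        ring

end PlaneTree

namespace PTAux

noncomputable def cb (n : ℕ) : ℚ := (Nat.centralBinom n : ℚ)
noncomputable def ct (n : ℕ) : ℚ := (catalan n : ℚ)

theorem L0 (n : ℕ) : ((n : ℚ) + 1) * ct n = cb n := by
  have := succ_mul_catalan_eq_centralBinom n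
  have h2 : (((n + 1) * catalan n : ℕ) : ℚ) = ((Nat.centralBinom n : ℕ) : ℚ) := by
    exact_mod_cast congrArg (Nat.cast (R := ℚ)) this
  push_cast at h2
  rw [cb, ct]; exact_mod_cast h2

theorem L1 (n : ℕ) : ((n : ℚ) + 1) * cb (n + 1) = 2 * (2 * n + 1) * cb n := by
  have := Nat.succ_mul_centralBinom_succ n
  rw [cb, cb]
  exact_mod_cast congrArg (Nat.cast (R := ℚ)) this

theorem L2 (n : ℕ) : cb (n + 1) = 4 * cb n - 2 * ct n := by
  have h0 := L0 n
  have h1 := L1 n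
  have hne : ((n : ℚ) + 1) ≠ 0 := by positivity
  field_simp at h0 h1 ⊢
  nlinarith [h0, h1]

/-- The convolution of central binomial coefficients. -/
theorem J4 : ∀ n : ℕ, ∑ i ∈ Finset.range (n + 1), cb i * cb (n - i) = 4 ^ n := by
  intro n
  induction n with
  | zero => simp [cb, Nat.centralBinom]
  | succ n ih =>
    set S := ∑ i ∈ Finset.range (n + 1), cb i * cb (n - i) with hS
    set T := ∑ i ∈ Finset.range (n + 2), ((i : ℚ) + 1) * (cb i * cb (n + 1 - i)) with hT
    set S' := ∑ i ∈ Finset.range (n + 2), cb i * cb (n + 1 - i) with hS'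
    -- reflection: T also equals sum with coefficient (n+2-i)
    have hrefl : T = ∑ i ∈ Finset.range (n + 2), ((n : ℚ) + 2 - i) * (cb i * cb (n + 1 - i)) := by
      rw [hT, ← Finset.sum_range_reflect (fun i => ((i : ℚ) + 1) * (cb i * cb (n + 1 - i))) (n + 2)]
      apply Finset.sum_congr rfl
      intro i hi
      rw [Finset.mem_range] at hi
      have h1 : n + 2 - 1 - i = n + 1 - i := by omega
      have h2 : n + 1 - (n + 1 - i) = i := by omega
      rw [h1, h2]
      have h3 : ((n + 1 - i : ℕ) : ℚ) = (n : ℚ) + 1 - i := by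
        have : i ≤ n + 1 := by omega
        push_cast [this]; ring
      rw [h3]; ring
    have hTT : T + T = ((n : ℚ) + 3) * S' := by
      nth_rewrite 2 [hrefl]
      rw [hT, ← Finset.sum_add_distrib, hS', Finset.mul_sum]
      apply Finset.sum_congr rfl
      intro i _
      ring
    -- compute T via the recurrence
    have hU : ∑ i ∈ Finset.range (n + 2), (i : ℚ) * (cb i * cb (n + 1 - i))
        = (2 * n + 2) * S := by
      rw [Finset.sum_range_succ']
      simp only [Nat.cast_zero, zero_mul, add_zero, Nat.cast_add, Nat.cast_one]
      have : ∀ i ∈ Finset.range (n + 1), ((i : ℚ) + 1) * (cb (i + 1) * cb (n + 1 - (i + 1)))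
          = (4 * i + 2) * (cb i * cb (n - i)) := by
        intro i hi
        have h1 : n + 1 - (i + 1) = n - i := by omega
        rw [h1]
        have := L1 i
        linear_combination cb (n - i) * this
      rw [Finset.sum_congr rfl this]
      -- now ∑ (4i+2) cb i cb (n-i) = 4 ∑ i cb_i cb_{n-i} + 2 S and reflection
      have hrefl2 : ∑ i ∈ Finset.range (n + 1), (i : ℚ) * (cb i * cb (n - i))
          = ∑ i ∈ Finset.range (n + 1), ((n : ℚ) - i) * (cb i * cb (n - i)) := by
        rw [← Finset.sum_range_reflect (fun i => ((i : ℚ)) * (cb i * cb (n - i))) (n + 1)]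
        apply Finset.sum_congr rfl
        intro i hi
        rw [Finset.mem_range] at hi
        have h1 : n + 1 - 1 - i = n - i := by omega
        have h2 : n - (n - i) = i := by omega
        rw [h1, h2]
        have h3 : ((n - i : ℕ) : ℚ) = (n : ℚ) - i := by
          have : i ≤ n := by omega
          push_cast [this]; ring
        rw [h3]; ring
      have hsum2 : (∑ i ∈ Finset.range (n + 1), (i : ℚ) * (cb i * cb (n - i))) * 2
          = (n : ℚ) * S := by
        rw [mul_two]
        nth_rewrite 2 [hrefl2]
        rw [← Finset.sum_add_distrib, hS, Finset.mul_sum]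
        apply Finset.sum_congr rfl
        intro i _
        ring
      have expand : ∑ i ∈ Finset.range (n + 1), (4 * (i:ℚ) + 2) * (cb i * cb (n - i))
          = 4 * (∑ i ∈ Finset.range (n + 1), (i : ℚ) * (cb i * cb (n - i))) + 2 * S := by
        rw [hS, Finset.mul_sum, Finset.mul_sum, ← Finset.sum_add_distrib]
        apply Finset.sum_congr rfl
        intro i _
        ring
      rw [expand]
      nlinarith [hsum2]
    have hTU : T = (2 * (n:ℚ) + 2) * S + S' := by
      rw [hT, hS']
      rw [← hU, ← Finset.sum_add_distrib]
      apply Finset.sum_congr rfl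
      intro i _
      ring
    -- combine: (n+3) S' = 2T = 2(2n+2)S + 2S'  => (n+1) S' = (4n+4) S
    have hfin : ((n : ℚ) + 1) * S' = (4 * n + 4) * S := by
      have := hTT
      rw [hTU] at this
      ring_nf at this ⊢
      linarith [this]
    have hne : ((n : ℚ) + 1) ≠ 0 := by positivity
    have : S' = 4 * S := by
      field_simp at hfin
      nlinarith [hfin, hne]
    show S' = 4 ^ (n + 1)
    rw [this, ih]
    ring


/-- pointwise: ct n = 2 cb n - cb (n+1) / 2 -/
theorem L3 (n : ℕ) : ct n = 2 * cb n - cb (n + 1) / 2 := by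
  have := L2 n
  linarith

/-- `∑ 4^k ct_{n-k}` -/
theorem J2 : ∀ n : ℕ, 2 * (∑ k ∈ Finset.range (n + 1), (4:ℚ) ^ k * ct (n - k))
    = 4 ^ (n + 1) - cb (n + 1) := by
  intro n
  induction n with
  | zero => simp [ct, cb, Nat.centralBinom]; norm_num [Nat.centralBinom]
  | succ n ih =>
    rw [Finset.sum_range_succ']
    have h0 : ∀ k ∈ Finset.range (n + 1), (4:ℚ) ^ (k+1) * ct (n + 1 - (k+1))
        = 4 * ((4:ℚ) ^ k * ct (n - k)) := by
      intro k hk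
      have : n + 1 - (k + 1) = n - k := by omega
      rw [this]; ring
    rw [Finset.sum_congr rfl h0, ← Finset.mul_sum]
    have hsimp : n + 1 - 0 = n + 1 := rfl
    rw [hsimp]
    have hL2 := L2 (n + 1)
    have : (4:ℚ)^0 * ct (n+1) = ct (n+1) := by ring
    rw [this]
    linear_combination 4 * ih + hL2

/-- `∑ cb_i ct_{m-i} = cb (m+1) / 2` -/
theorem J3 (m : ℕ) : ∑ i ∈ Finset.range (m + 1), cb i * ct (m - i) = cb (m + 1) / 2 := by
  have key : ∑ i ∈ Finset.range (m + 1), cb i * ct (m - i)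
      = 2 * (∑ i ∈ Finset.range (m + 1), cb i * cb (m - i))
        - (1/2) * (∑ i ∈ Finset.range (m + 1), cb i * cb (m + 1 - i)) := by
    rw [Finset.mul_sum, Finset.mul_sum, ← Finset.sum_sub_distrib]
    apply Finset.sum_congr rfl
    intro i hi
    rw [Finset.mem_range] at hi
    have h1 : m + 1 - i = (m - i) + 1 := by omega
    rw [h1, L3 (m - i)]
    ring
  rw [key, J4 m]
  have h2 : ∑ i ∈ Finset.range (m + 1), cb i * cb (m + 1 - i)
      = 4 ^ (m + 1) - cb (m + 1) := by
    have := J4 (m + 1)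
    rw [Finset.sum_range_succ] at this
    have h3 : m + 1 - (m + 1) = 0 := by omega
    rw [h3] at this
    have hcb0 : cb 0 = 1 := by norm_num [cb, Nat.centralBinom]
    rw [hcb0] at this
    linarith
  rw [h2]
  ring

theorem catalan_conv (n : ℕ) :
    ∑ k ∈ Finset.range (n + 1), ct k * ct (n - k) = ct (n + 1) := by
  have := catalan_succ' n
  rw [Finset.Nat.sum_antidiagonal_eq_sum_range_succ
    (fun x y => catalan x * catalan y) n] at this
  have h2 := congrArg (Nat.cast (R := ℚ)) this
  push_cast at h2
  rw [ct]
  rw [h2]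
  apply Finset.sum_congr rfl
  intro k _
  rw [ct, ct]

theorem J1 (n : ℕ) : ∑ k ∈ Finset.range (n + 1), (2 * (k:ℚ) + 1) * (ct k * ct (n - k))
    = ((n:ℚ) + 1) * ct (n + 1) := by
  have hrefl : ∑ k ∈ Finset.range (n + 1), (2 * (k:ℚ) + 1) * (ct k * ct (n - k))
      = ∑ k ∈ Finset.range (n + 1), (2 * ((n:ℚ) - k) + 1) * (ct k * ct (n - k)) := by
    rw [← Finset.sum_range_reflect (fun k => (2 * (k:ℚ) + 1) * (ct k * ct (n - k))) (n + 1)]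
    apply Finset.sum_congr rfl
    intro i hi
    rw [Finset.mem_range] at hi
    have h1 : n + 1 - 1 - i = n - i := by omega
    have h2 : n - (n - i) = i := by omega
    rw [h1, h2]
    have h3 : ((n - i : ℕ) : ℚ) = (n : ℚ) - i := by
      have : i ≤ n := by omega
      push_cast [this]; ring
    rw [h3]; ring
  have hdouble : (∑ k ∈ Finset.range (n + 1), (2 * (k:ℚ) + 1) * (ct k * ct (n - k))) * 2
      = (2 * (n:ℚ) + 2) * ∑ k ∈ Finset.range (n + 1), ct k * ct (n - k) := by
    rw [mul_two]
    nth_rewrite 2 [hrefl]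
    rw [← Finset.sum_add_distrib, Finset.mul_sum]
    apply Finset.sum_congr rfl
    intro k _
    ring
  rw [catalan_conv] at hdouble
  linarith

end PTAux

namespace PlaneTree
open PTAux

theorem fS_eq : ∀ n : ℕ, (fS n : ℚ) = 4 ^ n - (Nat.centralBinom (n + 1) : ℚ) / 2 := by
  intro n
  induction n using Nat.strong_induction_on with
  | _ n ih =>
    cases n with
    | zero =>
      rw [fS_zero]
      norm_num [Nat.centralBinom]
    | succ n =>
      have hcast := congrArg (Nat.cast (R := ℚ)) (fS_succ n)
      push_cast at hcast
      rw [hcast]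
      have key : ∀ k ∈ Finset.range (n + 1),
          (((fS k : ℚ)) + (2 * (k:ℚ) + 1) * (catalan k : ℚ)) * (catalan (n - k) : ℚ)
            + (catalan k : ℚ) * ((fS (n - k) : ℚ))
          = ((((4:ℚ)^k * (catalan (n-k) : ℚ)
              - (Nat.centralBinom (k+1) : ℚ)/2 * (catalan (n-k) : ℚ))
             + (2*(k:ℚ)+1) * ((catalan k : ℚ) * (catalan (n-k) : ℚ)))
            + ((catalan k : ℚ) * (4:ℚ)^(n-k)
              - (catalan k : ℚ) * (Nat.centralBinom (n-k+1) : ℚ)/2)) := by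
        intro k hk
        rw [Finset.mem_range] at hk
        rw [ih k (by omega), ih (n - k) (by omega)]
        ring
      rw [Finset.sum_congr rfl key]
      rw [Finset.sum_add_distrib, Finset.sum_add_distrib, Finset.sum_sub_distrib,
        Finset.sum_sub_distrib]
      -- now evaluate the five sums
      have hJ2 := PTAux.J2 n
      simp only [PTAux.ct, PTAux.cb] at hJ2
      have hJ1 := PTAux.J1 n
      simp only [PTAux.ct] at hJ1
      have hE4 : ∑ k ∈ Finset.range (n + 1), (catalan k : ℚ) * (4:ℚ)^(n-k)
          = ∑ k ∈ Finset.range (n + 1), (4:ℚ)^k * (catalan (n-k) : ℚ) := by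
        rw [← Finset.sum_range_reflect (fun k => (catalan k : ℚ) * (4:ℚ)^(n-k)) (n + 1)]
        apply Finset.sum_congr rfl
        intro i hi
        rw [Finset.mem_range] at hi
        have h1 : n + 1 - 1 - i = n - i := by omega
        have h2 : n - (n - i) = i := by omega
        rw [h1, h2]; ring
      have hE5 : ∑ k ∈ Finset.range (n + 1),
            (catalan k : ℚ) * (Nat.centralBinom (n-k+1) : ℚ)/2
          = ∑ k ∈ Finset.range (n + 1),
            (Nat.centralBinom (k+1) : ℚ)/2 * (catalan (n-k) : ℚ) := by
        rw [← Finset.sum_range_reflect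
          (fun k => (catalan k : ℚ) * (Nat.centralBinom (n-k+1) : ℚ)/2) (n + 1)]
        apply Finset.sum_congr rfl
        intro i hi
        rw [Finset.mem_range] at hi
        have h1 : n + 1 - 1 - i = n - i := by omega
        have h2 : n - (n - i) = i := by omega
        rw [h1, h2]; ring
      have h1 : ∑ k ∈ Finset.range (n + 1),
            (Nat.centralBinom (k+1) : ℚ) * (catalan (n-k) : ℚ)
          = (Nat.centralBinom (n+2) : ℚ)/2 - (catalan (n+1) : ℚ) := by
        have hJ3 := PTAux.J3 (n + 1)
        simp only [PTAux.ct, PTAux.cb] at hJ3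
        rw [Finset.sum_range_succ'] at hJ3
        have h0 : ∀ k ∈ Finset.range (n + 1),
            (Nat.centralBinom (k+1) : ℚ) * (catalan (n + 1 - (k+1)) : ℚ)
            = (Nat.centralBinom (k+1) : ℚ) * (catalan (n - k) : ℚ) := by
          intro k _
          have hnk : n + 1 - (k + 1) = n - k := by omega
          rw [hnk]
        rw [Finset.sum_congr rfl h0] at hJ3
        have hcb0 : (Nat.centralBinom 0 : ℚ) = 1 := by norm_num [Nat.centralBinom]
        rw [hcb0] at hJ3
        have hsub : n + 1 - 0 = n + 1 := rfl
        rw [hsub] at hJ3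
        linarith
      have hE2 : ∑ k ∈ Finset.range (n + 1),
            (Nat.centralBinom (k+1) : ℚ)/2 * (catalan (n-k) : ℚ)
          = ((Nat.centralBinom (n+2) : ℚ)/2 - (catalan (n+1) : ℚ)) / 2 := by
        rw [Finset.sum_congr rfl (fun k _ => by
          rw [div_mul_eq_mul_div])]
        rw [← Finset.sum_div, h1]
      have hL0 : ((n:ℚ) + 2) * (catalan (n+1) : ℚ) = (Nat.centralBinom (n+1) : ℚ) := by
        have := PTAux.L0 (n + 1)
        simp only [PTAux.ct, PTAux.cb] at this
        push_cast at this
        linarith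
      rw [hE4, hE5, hE2]
      linarith


theorem fS_closed (n : ℕ) : fS n + (2 * n + 1).choose n = 4 ^ n := by
  have hsymm : (2*n+1).choose (n+1) = (2*n+1).choose n := by
    have h := Nat.choose_symm (n := 2*n+1) (k := n) (by omega)
    have h2 : 2*n+1 - n = n + 1 := by omega
    rw [h2] at h
    exact h
  have hcb : Nat.centralBinom (n+1) = 2 * ((2*n+1).choose n) := by
    rw [Nat.centralBinom]
    have h2 : 2 * (n+1) = (2*n+1) + 1 := by omega
    rw [h2, Nat.choose_succ_succ, hsymm]
    omega
  have hq := fS_eq n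
  rw [hcb] at hq
  push_cast at hq
  have hq2 : (fS n : ℚ) + ((2*n+1).choose n : ℚ) = 4 ^ n := by linarith
  exact_mod_cast hq2

/-- The finset of marked rows `(s, i)` for a tree `A`. -/
def pairsFinset (A : PlaneTree) : Finset (List ℕ × ℕ) :=
  ((vertices A).toFinset.filter (fun s => s ≠ [])).biUnion
    (fun s => (Finset.Icc 1 (2 * s.length - 1)).image (fun i => (s, i)))

theorem mem_pairsFinset (A : PlaneTree) (s : List ℕ) (i : ℕ) :
    (s, i) ∈ pairsFinset A ↔ s ∈ vertices A ∧ s ≠ [] ∧ 1 ≤ i ∧ i ≤ 2 * s.length - 1 := by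
  rw [pairsFinset]
  simp only [Finset.mem_biUnion, Finset.mem_filter, List.mem_toFinset, Finset.mem_image,
    Finset.mem_Icc, Prod.mk.injEq]
  constructor
  · rintro ⟨t, ⟨ht, hne⟩, j, hj, rfl, rfl⟩
    exact ⟨ht, hne, hj.1, hj.2⟩
  · rintro ⟨ht, hne, h1, h2⟩
    exact ⟨s, ⟨ht, hne⟩, i, ⟨h1, h2⟩, rfl, rfl⟩

theorem card_pairsFinset (A : PlaneTree) : (pairsFinset A).card = w A := by
  rw [pairsFinset, Finset.card_biUnion]
  · have h1 : ∀ s ∈ (vertices A).toFinset.filter (fun s => s ≠ []),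
        ((Finset.Icc 1 (2 * s.length - 1)).image (fun i => (s, i))).card
          = 2 * s.length - 1 := by
      intro s _
      rw [Finset.card_image_of_injective _ (fun a b h => by injection h), Nat.card_Icc]
      omega
    rw [Finset.sum_congr rfl h1]
    rw [Finset.sum_filter]
    have h2 : ∀ s ∈ (vertices A).toFinset,
        (if s ≠ [] then 2 * s.length - 1 else 0)
          = (if s = [] then 0 else 2 * s.length - 1) := by
      intro s _
      by_cases hs : s = [] <;> simp [hs]
    rw [Finset.sum_congr rfl h2]
    rw [← wsum_eq A]
    exact List.sum_toFinset _ (nodup_vertices A)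
  · intro a _ b _ hab
    rw [Function.onFun, Finset.disjoint_left]
    rintro ⟨s, i⟩ hsa hsb
    simp only [Finset.mem_image, Finset.mem_Icc, Prod.mk.injEq] at hsa hsb
    obtain ⟨_, _, rfl, _⟩ := hsa
    obtain ⟨_, _, h, _⟩ := hsb
    exact hab (h ▸ rfl)

/-- All triples for trees with `n+1` vertices -/
def triples (m : ℕ) : Finset (PlaneTree × List ℕ × ℕ) :=
  ((forests m).image node).biUnion
    (fun A => (pairsFinset A).image (fun p => (A, p.1, p.2)))

theorem mem_triples (m : ℕ) (x : PlaneTree × List ℕ × ℕ) :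
    x ∈ triples m ↔ sz x.1 = m + 1 ∧ x.2.1 ∈ vertices x.1 ∧ x.2.1 ≠ []
      ∧ 1 ≤ x.2.2 ∧ x.2.2 ≤ 2 * x.2.1.length - 1 := by
  obtain ⟨A, s, i⟩ := x
  rw [triples]
  simp only [Finset.mem_biUnion, Finset.mem_image, Prod.mk.injEq]
  constructor
  · rintro ⟨B, ⟨cs, hcs, rfl⟩, ⟨⟨t, j⟩, hp, rfl, rfl, rfl⟩⟩
    have hsz : sz (node cs) = m + 1 := by
      rw [sz_node, (mem_forests m cs).mp hcs]; omega
    have := (mem_pairsFinset (node cs) t j).mp hp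
    exact ⟨hsz, this.1, this.2.1, this.2.2.1, this.2.2.2⟩
  · rintro ⟨hsz, hv, hne, h1, h2⟩
    obtain ⟨cs⟩ := A
    refine ⟨node cs, ⟨cs, ?_, rfl⟩, ⟨(s, i), (mem_pairsFinset _ s i).mpr ⟨hv, hne, h1, h2⟩,
      rfl, rfl, rfl⟩⟩
    rw [mem_forests]
    rw [sz_node] at hsz
    omega

theorem card_triples (m : ℕ) : (triples m).card = fS m := by
  rw [triples, Finset.card_biUnion]
  · have h1 : ∀ A ∈ (forests m).image node,
        ((pairsFinset A).image (fun p => (A, p.1, p.2))).card = w A := by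
      intro A _
      rw [Finset.card_image_of_injective _ (fun a b h => by
        simp only [Prod.mk.injEq] at h
        exact Prod.ext h.2.1 h.2.2), card_pairsFinset]
    rw [Finset.sum_congr rfl h1]
    rw [Finset.sum_image (fun a _ b _ h => node.inj h)]
    rw [fS]
    apply Finset.sum_congr rfl
    intro cs _
    exact (w_node cs).symm ▸ rfl
  · intro a _ b _ hab
    rw [Function.onFun, Finset.disjoint_left]
    rintro ⟨A, s, i⟩ hsa hsb
    simp only [Finset.mem_image, Prod.mk.injEq, Prod.exists] at hsa hsb
    obtain ⟨_, _, _, rfl, _, _⟩ := hsa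
    obtain ⟨_, _, _, h, _, _⟩ := hsb
    exact hab (h ▸ rfl)

end PlaneTree

/-- The number of triples `(A, s, i)` where `A` is a rooted plane tree with `n`
vertices, `s` is a non-root vertex of `A` and `1 ≤ i ≤ 2·depth(s) − 1`,
equals `4^(n-1) - C(2n-1, n-1)`. -/
theorem numTriples_eq (n : ℕ) (hn : 2 ≤ n) :
    Set.ncard {x : PlaneTree × List ℕ × ℕ |
        (PlaneTree.vertices x.1).length = n ∧
        x.2.1 ∈ PlaneTree.vertices x.1 ∧
        x.2.1 ≠ [] ∧
        1 ≤ x.2.2 ∧ x.2.2 ≤ 2 * x.2.1.length - 1} =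
      4 ^ (n - 1) - (2 * n - 1).choose (n - 1) := by
  have hm : n - 1 + 1 = n := by omega
  have hset : {x : PlaneTree × List ℕ × ℕ |
        (PlaneTree.vertices x.1).length = n ∧
        x.2.1 ∈ PlaneTree.vertices x.1 ∧
        x.2.1 ≠ [] ∧
        1 ≤ x.2.2 ∧ x.2.2 ≤ 2 * x.2.1.length - 1}
      = ↑(PlaneTree.triples (n - 1)) := by
    ext x
    simp only [Set.mem_setOf_eq, Finset.mem_coe]
    rw [PlaneTree.mem_triples, hm, PlaneTree.length_vertices]
  rw [hset, Set.ncard_coe_finset, PlaneTree.card_triples]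
  have h := PlaneTree.fS_closed (n - 1)
  have h2 : 2 * (n - 1) + 1 = 2 * n - 1 := by omega
  rw [h2] at h
  omega
end

section
/- For every n ≥ 0, the total area under all Dyck paths of semilength n equals 4^n − binomial(2n+1, n), where the area under a Dyck path is the number of full unit squares (equivalently, the sum over all up-steps of the height reached, counted appropriately as in OEIS A008549) between the path and the x-axis. -/
open Finset

namespace AreaProof
open List DyckStep


/-- Sum of heights at all abscissas of a list of Dyck steps. -/
def listArea (l : List DyckStep) : ℕ :=
  ∑ k ∈ Finset.range (l.length + 1), ((l.take k).count U - (l.take k).count D)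

@[simp] lemma listArea_nil : listArea [] = 0 := by simp [listArea]

lemma listArea_append (a b : List DyckStep) (ha : a.count U = a.count D) :
    listArea (a ++ b) = listArea a + listArea b := by
  have key : listArea a = ∑ k ∈ Finset.range a.length,
      ((a.take k).count U - (a.take k).count D) := by
    rw [listArea, Finset.sum_range_succ, List.take_of_length_le le_rfl, ha,
      Nat.sub_self, add_zero]
  rw [listArea, length_append, add_assoc, Finset.sum_range_add, key, listArea]
  congr 1
  · exact Finset.sum_congr rfl fun k hk => by
      rw [List.take_append_of_le_length (le_of_lt (Finset.mem_range.mp hk))]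
  · exact Finset.sum_congr rfl fun k _ => by
      rw [List.take_length_add_append, count_append, count_append, ha, Nat.add_sub_add_left]

lemma listArea_nest (a : List DyckStep) (ha : a.count U = a.count D)
    (hpre : ∀ i, (a.take i).count D ≤ (a.take i).count U) :
    listArea (U :: (a ++ [D])) = listArea a + a.length + 1 := by
  have hlen : (U :: (a ++ [D])).length = a.length + 2 := by simp
  rw [listArea, hlen]
  rw [show a.length + 2 + 1 = (a.length + 2) + 1 from rfl, Finset.sum_range_succ',
    Finset.sum_range_succ]
  have h0 : (List.take 0 (U :: (a ++ [D]))).count U - (List.take 0 (U :: (a ++ [D]))).count D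
      = 0 := by simp
  have hlast : (List.take (a.length + 1 + 1) (U :: (a ++ [D]))).count U
      - (List.take (a.length + 1 + 1) (U :: (a ++ [D]))).count D = 0 := by
    rw [List.take_of_length_le (by simp)]
    simp [count_cons, count_append, ha]
  rw [h0, hlast, add_zero, add_zero]
  have hterm : ∀ i ∈ Finset.range (a.length + 1),
      (List.take (i + 1) (U :: (a ++ [D]))).count U
        - (List.take (i + 1) (U :: (a ++ [D]))).count D
      = ((a.take i).count U - (a.take i).count D) + 1 := by
    intro i hi
    rw [List.take_succ_cons, List.take_append_of_le_length
      (Nat.lt_succ_iff.mp (Finset.mem_range.mp hi))]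
    rw [count_cons_self, count_cons_of_ne (by simp)]
    have := hpre i
    omega
  rw [Finset.sum_congr rfl hterm, Finset.sum_add_distrib, Finset.sum_const, Finset.card_range,
    listArea]
  ring
def area (p : DyckWord) : ℕ := listArea p.toList

@[simp] lemma area_zero : area 0 = 0 := by
  have h : (0 : DyckWord).toList = [] := rfl
  simp [area, h, listArea]

lemma area_add (p q : DyckWord) : area (p + q) = area p + area q :=
  listArea_append _ _ p.count_U_eq_count_D

lemma area_nest (p : DyckWord) : area p.nest = area p + 2 * p.semilength + 1 := by
  have : p.nest.toList = U :: (p.toList ++ [D]) := rfl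
  rw [area, this, listArea_nest _ p.count_U_eq_count_D p.count_D_le_count_U,
    ← p.two_mul_semilength_eq_length]
  rfl

/-- Total area over all Dyck words of semilength `n`. -/
def totalArea (n : ℕ) : ℕ := ∑ p : {p : DyckWord // p.semilength = n}, area p.1

lemma totalArea_zero : totalArea 0 = 0 := by
  apply Finset.sum_eq_zero
  rintro ⟨p, hp⟩ -
  have : p.toList = [] := by
    have := p.two_mul_semilength_eq_length
    rw [hp] at this
    exact List.length_eq_zero_iff.mp (by omega)
  simp [area, listArea, this]

/-- First-return decomposition as an equivalence. -/
def decompFun (n : ℕ)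
    (x : Σ i : Fin (n + 1), {p : DyckWord // p.semilength = i.1} ×
      {q : DyckWord // q.semilength = n - i.1}) : {p : DyckWord // p.semilength = n + 1} :=
  ⟨x.2.1.1.nest + x.2.2.1, by
    have hi : x.1.1 ≤ n := Nat.lt_succ_iff.mp x.1.2
    have h1 := x.2.1.2
    have h2 := x.2.2.2
    rw [DyckWord.semilength_add, DyckWord.semilength_nest]
    omega⟩

lemma decompFun_bijective (n : ℕ) : Function.Bijective (decompFun n) := by
  constructor
  · rintro ⟨⟨i, hi⟩, ⟨x, hx⟩, ⟨y, hy⟩⟩ ⟨⟨i', hi'⟩, ⟨x', hx'⟩, ⟨y', hy'⟩⟩ h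
    simp only [decompFun, Subtype.mk.injEq] at h
    have ex : x = x' := by
      have := congrArg DyckWord.insidePart h
      rwa [DyckWord.insidePart_add DyckWord.nest_ne_zero, DyckWord.insidePart_nest,
        DyckWord.insidePart_add DyckWord.nest_ne_zero, DyckWord.insidePart_nest] at this
    have ey : y = y' := by
      have := congrArg DyckWord.outsidePart h
      rwa [DyckWord.outsidePart_add DyckWord.nest_ne_zero, DyckWord.outsidePart_nest,
        DyckWord.outsidePart_add DyckWord.nest_ne_zero, DyckWord.outsidePart_nest,
        zero_add, zero_add] at this
    subst ex
    subst ey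
    have eii : i = i' := by
      have h1 : x.semilength = i := hx
      have h2 : x.semilength = i' := hx'
      omega
    subst eii
    rfl
  · rintro ⟨p, hp⟩
    have h : p ≠ 0 := fun h0 => by rw [h0] at hp; simp at hp
    have hlt := p.semilength_insidePart_lt h
    have hsum := p.semilength_insidePart_add_semilength_outsidePart_add_one h
    refine ⟨⟨⟨p.insidePart.semilength, by omega⟩, ⟨p.insidePart, rfl⟩,
      ⟨p.outsidePart, by
        show p.outsidePart.semilength = n - p.insidePart.semilength
        omega⟩⟩, ?_⟩
    exact Subtype.ext (DyckWord.nest_insidePart_add_outsidePart h)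

noncomputable def decompEquiv (n : ℕ) :
    (Σ i : Fin (n + 1), {p : DyckWord // p.semilength = i.1} ×
      {q : DyckWord // q.semilength = n - i.1}) ≃ {p : DyckWord // p.semilength = n + 1} :=
  Equiv.ofBijective _ (decompFun_bijective n)

lemma totalArea_succ (n : ℕ) : totalArea (n + 1) = ∑ i ∈ Finset.range (n + 1),
    (totalArea i * catalan (n - i) + catalan i * totalArea (n - i)
      + (2 * i + 1) * (catalan i * catalan (n - i))) := by
  rw [totalArea, ← Equiv.sum_comp (decompEquiv n) (fun p => area p.1)]
  rw [← Finset.univ_sigma_univ, Finset.sum_sigma]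
  rw [← Fin.sum_univ_eq_sum_range]
  apply Finset.sum_congr rfl
  intro i _
  rw [Fintype.sum_prod_type]
  have step : ∀ (x : {p : DyckWord // p.semilength = i.1})
      (y : {q : DyckWord // q.semilength = n - i.1}),
      area ((decompEquiv n ⟨i, x, y⟩).1) = area x.1 + area y.1 + (2 * i.1 + 1) := by
    intro x y
    show area (x.1.nest + y.1) = _
    rw [area_add, area_nest, x.2]
    ring
  simp only [step]
  have cX : Fintype.card {p : DyckWord // p.semilength = i.1} = catalan i.1 :=
    DyckWord.card_dyckWord_semilength_eq_catalan _
  have cY : Fintype.card {q : DyckWord // q.semilength = n - i.1} = catalan (n - i.1) :=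
    DyckWord.card_dyckWord_semilength_eq_catalan _
  have inner : ∀ x : {p : DyckWord // p.semilength = i.1},
      (∑ y : {q : DyckWord // q.semilength = n - i.1}, (area x.1 + area y.1 + (2 * i.1 + 1)))
        = catalan (n - i.1) * area x.1
          + (catalan (n - i.1) * (2 * i.1 + 1) + totalArea (n - i.1)) := by
    intro x
    have e : ∀ y : {q : DyckWord // q.semilength = n - i.1},
        area x.1 + area y.1 + (2 * i.1 + 1) = (area x.1 + (2 * i.1 + 1)) + area y.1 :=
      fun y => by ring
    simp only [e]
    rw [Finset.sum_add_distrib, Finset.sum_const, Finset.card_univ, cY, smul_eq_mul]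
    rw [show (∑ y : {q : DyckWord // q.semilength = n - i.1}, area y.1)
      = totalArea (n - i.1) from rfl]
    ring
  simp only [inner]
  rw [Finset.sum_add_distrib, Finset.sum_const, Finset.card_univ, cX, smul_eq_mul,
    ← Finset.mul_sum,
    show (∑ x : {p : DyckWord // p.semilength = i.1}, area x.1) = totalArea i.1 from rfl]
  ring

/-- Closed-form sequence: B 0 = 0, B (n+1) = 4 B n + catalan (n+1). -/
def B : ℕ → ℕ
  | 0 => 0
  | n + 1 => 4 * B n + catalan (n + 1)

lemma catalan_ratio (n : ℕ) : (n + 2) * catalan (n + 1) = 2 * (2 * n + 1) * catalan n := by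
  have h1 := succ_mul_catalan_eq_centralBinom (n + 1)
  have h2 := Nat.succ_mul_centralBinom_succ n
  have h3 := succ_mul_catalan_eq_centralBinom n
  apply Nat.eq_of_mul_eq_mul_left (show 0 < n + 1 by omega)
  calc (n + 1) * ((n + 2) * catalan (n + 1))
      = (n + 1) * ((n + 1 + 1) * catalan (n + 1)) := by ring
    _ = (n + 1) * Nat.centralBinom (n + 1) := by rw [h1]
    _ = 2 * (2 * n + 1) * Nat.centralBinom n := h2
    _ = 2 * (2 * n + 1) * ((n + 1) * catalan n) := by rw [h3]
    _ = (n + 1) * (2 * (2 * n + 1) * catalan n) := by ring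

def S (n : ℕ) : ℕ := ∑ i ∈ Finset.range (n + 1), B i * catalan (n - i)

lemma catalan_conv (n : ℕ) :
    catalan (n + 1) = ∑ i ∈ Finset.range (n + 1), catalan i * catalan (n - i) := by
  rw [catalan_succ]
  exact Fin.sum_univ_eq_sum_range (fun i => catalan i * catalan (n - i)) (n + 1)

lemma S_succ (n : ℕ) : S (n + 1) + catalan (n + 1) = 4 * S n + catalan (n + 2) := by
  have h1 : S (n + 1) = ∑ i ∈ Finset.range (n + 1), B (i + 1) * catalan (n - i) := by
    rw [S, Finset.sum_range_succ']
    simp [B]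
  have h2 : ∀ i ∈ Finset.range (n + 1), B (i + 1) * catalan (n - i)
      = 4 * (B i * catalan (n - i)) + catalan (i + 1) * catalan (n - i) := by
    intro i _
    show (4 * B i + catalan (i + 1)) * catalan (n - i) = _
    ring
  rw [h1, Finset.sum_congr rfl h2, Finset.sum_add_distrib, ← Finset.mul_sum]
  have h3 : catalan (n + 2) = (∑ i ∈ Finset.range (n + 1), catalan (i + 1) * catalan (n - i))
      + catalan 0 * catalan (n + 1) := by
    rw [catalan_conv (n + 1), Finset.sum_range_succ']
    congr 1
    apply Finset.sum_congr rfl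
    intro i _
    have h : n + 1 - (i + 1) = n - i := by omega
    rw [h]
  rw [catalan_zero, one_mul] at h3
  rw [S]
  omega

lemma main2 (n : ℕ) : 4 * B n = 2 * S n + n * catalan (n + 1) := by
  induction n with
  | zero => simp [B, S]
  | succ n ih =>
    have hS := S_succ n
    have hr := catalan_ratio (n + 1)
    have hB : B (n + 1) = 4 * B n + catalan (n + 1) := rfl
    nlinarith [hS, hr, hB, ih]

lemma T_eq (n : ℕ) :
    (∑ i ∈ Finset.range (n + 1), (2 * i + 1) * (catalan i * catalan (n - i)))
      = (n + 1) * catalan (n + 1) := by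
  have hrefl : (∑ i ∈ Finset.range (n + 1), (2 * i + 1) * (catalan i * catalan (n - i)))
      = ∑ i ∈ Finset.range (n + 1), (2 * (n - i) + 1) * (catalan (n - i) * catalan i) := by
    rw [← Finset.sum_range_reflect]
    apply Finset.sum_congr rfl
    intro i hi
    have hi' : i ≤ n := Nat.lt_succ_iff.mp (Finset.mem_range.mp hi)
    have e1 : n + 1 - 1 - i = n - i := by omega
    have e2 : n - (n - i) = i := by omega
    rw [e1, e2]
  have two_T : 2 * (∑ i ∈ Finset.range (n + 1), (2 * i + 1) * (catalan i * catalan (n - i)))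
      = (2 * n + 2) * catalan (n + 1) := by
    rw [two_mul]
    nth_rewrite 2 [hrefl]
    rw [← Finset.sum_add_distrib]
    rw [catalan_conv n, Finset.mul_sum]
    apply Finset.sum_congr rfl
    intro i hi
    have hi' : i ≤ n := Nat.lt_succ_iff.mp (Finset.mem_range.mp hi)
    have e : 2 * (n - i) + 1 = 2 * n + 1 - 2 * i := by omega
    rw [e]
    have h2i : 2 * i + 1 + (2 * n + 1 - 2 * i) = 2 * n + 2 := by omega
    calc (2 * i + 1) * (catalan i * catalan (n - i))
          + (2 * n + 1 - 2 * i) * (catalan (n - i) * catalan i)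
        = (2 * i + 1 + (2 * n + 1 - 2 * i)) * (catalan i * catalan (n - i)) := by ring
      _ = (2 * n + 2) * (catalan i * catalan (n - i)) := by rw [h2i]
  have h2 : 2 * ((n + 1) * catalan (n + 1)) = (2 * n + 2) * catalan (n + 1) := by ring
  omega

lemma refl_S (n : ℕ) :
    (∑ i ∈ Finset.range (n + 1), catalan i * B (n - i)) = S n := by
  rw [S, ← Finset.sum_range_reflect]
  apply Finset.sum_congr rfl
  intro i hi
  have hi' : i ≤ n := Nat.lt_succ_iff.mp (Finset.mem_range.mp hi)
  have e1 : n + 1 - 1 - i = n - i := by omega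
  have e2 : n - (n - i) = i := by omega
  rw [e1, e2, mul_comm]

lemma B_conv (n : ℕ) : B (n + 1) = ∑ i ∈ Finset.range (n + 1),
    (B i * catalan (n - i) + catalan i * B (n - i)
      + (2 * i + 1) * (catalan i * catalan (n - i))) := by
  rw [Finset.sum_add_distrib, Finset.sum_add_distrib, refl_S, T_eq]
  have hm := main2 n
  have hB : B (n + 1) = 4 * B n + catalan (n + 1) := rfl
  have hS : (∑ i ∈ Finset.range (n + 1), B i * catalan (n - i)) = S n := rfl
  rw [hS, hB]
  have e : (n + 1) * catalan (n + 1) = n * catalan (n + 1) + catalan (n + 1) := by ring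
  omega

lemma B_closed (n : ℕ) : B n + (2 * n + 1) * catalan n = 4 ^ n := by
  induction n with
  | zero => simp [B]
  | succ n ih =>
    have hr := catalan_ratio n
    have hB : B (n + 1) = 4 * B n + catalan (n + 1) := rfl
    have hp : (4 : ℕ) ^ (n + 1) = 4 * 4 ^ n := by ring
    nlinarith [hr, hB, ih, hp]

lemma choose_eq_catalan (n : ℕ) : (2 * n + 1).choose n = (2 * n + 1) * catalan n := by
  apply Nat.eq_of_mul_eq_mul_left (show 0 < n + 1 by omega)
  have h0 : 2 * n + 1 - (n + 1) = n := by omega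
  have h1 := Nat.choose_symm (show n + 1 ≤ 2 * n + 1 by omega)
  rw [h0] at h1
  have h2 := Nat.add_one_mul_choose_eq (2 * n) n
  have h3 := succ_mul_catalan_eq_centralBinom n
  calc (n + 1) * ((2 * n + 1).choose n) = (2 * n + 1).choose (n + 1) * (n + 1) := by
        rw [← h1]; ring
    _ = (2 * n + 1) * (2 * n).choose n := h2.symm
    _ = (2 * n + 1) * Nat.centralBinom n := by rw [Nat.centralBinom]
    _ = (2 * n + 1) * ((n + 1) * catalan n) := by rw [h3]
    _ = (n + 1) * ((2 * n + 1) * catalan n) := by ring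

lemma B_eq (n : ℕ) : B n = 4 ^ n - (2 * n + 1).choose n := by
  have h1 := B_closed n
  have h2 := choose_eq_catalan n
  omega
variable {m : ℕ}

def toSteps (f : Fin m → Bool) : List DyckStep := List.ofFn (fun i => if f i then U else D)

@[simp] lemma length_toSteps (f : Fin m → Bool) : (toSteps f).length = m := by simp [toSteps]

lemma count_take_toSteps (f : Fin m → Bool) (b : Bool) (k : ℕ) :
    ((toSteps f).take k).count (if b then U else D)
      = (Finset.univ.filter fun i : Fin m => i.1 < k ∧ f i = b).card := by
  induction k with
  | zero => simp
  | succ k ih =>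
    rcases le_or_gt m k with h | h
    · have e1 : (toSteps f).take (k + 1) = (toSteps f).take k := by
        rw [List.take_of_length_le (by simp; omega), List.take_of_length_le (by simp [h])]
      rw [e1, ih]
      congr 1
      apply Finset.filter_congr
      intro i _
      have him : i.1 < m := i.2
      constructor
      · rintro ⟨-, hb⟩; exact ⟨by omega, hb⟩
      · rintro ⟨-, hb⟩; exact ⟨by omega, hb⟩
    · have hlen : k < (toSteps f).length := by simp [h]
      have e1 : (toSteps f).take (k + 1)
          = (toSteps f).take k ++ [if f ⟨k, h⟩ then U else D] := by
        rw [List.take_succ, List.getElem?_eq_getElem hlen]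
        congr 1
        simp [toSteps]
      rw [e1, List.count_append, ih]
      have hsplit : (Finset.univ.filter fun i : Fin m => i.1 < k + 1 ∧ f i = b)
          = (Finset.univ.filter fun i : Fin m => i.1 < k ∧ f i = b)
            ∪ (Finset.univ.filter fun i : Fin m => i = ⟨k, h⟩ ∧ f i = b) := by
        ext i
        simp only [Finset.mem_filter, Finset.mem_union, Finset.mem_univ, true_and]
        constructor
        · rintro ⟨hik, hb⟩
          rcases Nat.lt_succ_iff_lt_or_eq.mp hik with h' | h'
          · exact Or.inl ⟨h', hb⟩
          · exact Or.inr ⟨Fin.ext h', hb⟩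
        · rintro (⟨h', hb⟩ | ⟨rfl, hb⟩)
          · exact ⟨by omega, hb⟩
          · exact ⟨by simp, hb⟩
      have hdisj : Disjoint (Finset.univ.filter fun i : Fin m => i.1 < k ∧ f i = b)
          (Finset.univ.filter fun i : Fin m => i = ⟨k, h⟩ ∧ f i = b) := by
        rw [Finset.disjoint_left]
        rintro i hi1 hi2
        simp only [Finset.mem_filter, Finset.mem_univ, true_and] at hi1 hi2
        have : i.1 = k := by rw [hi2.1]
        omega
      rw [hsplit, Finset.card_union_of_disjoint hdisj]
      congr 1
      have hcnt : List.count (if b then U else D) [if f ⟨k, h⟩ then U else D]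
          = if f ⟨k, h⟩ = b then 1 else 0 := by
        cases b <;> cases hfk : f ⟨k, h⟩ <;> simp [hfk]
      have hcard : (Finset.univ.filter fun i : Fin m => i = ⟨k, h⟩ ∧ f i = b).card
          = if f ⟨k, h⟩ = b then 1 else 0 := by
        by_cases hf : f ⟨k, h⟩ = b
        · rw [if_pos hf, show (Finset.univ.filter fun i : Fin m => i = ⟨k, h⟩ ∧ f i = b)
              = {⟨k, h⟩} from by
            ext i
            simp only [Finset.mem_filter, Finset.mem_univ, true_and, Finset.mem_singleton]
            constructor
            · rintro ⟨hik, -⟩; exact hik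
            · rintro rfl; exact ⟨rfl, hf⟩]
          exact Finset.card_singleton _
        · rw [if_neg hf]
          rw [Finset.card_eq_zero.mpr (Finset.filter_eq_empty_iff.mpr ?_)]
          rintro i - ⟨rfl, hb⟩
          exact hf hb
      rw [hcnt, hcard]

lemma count_U_take (f : Fin m → Bool) (k : ℕ) :
    ((toSteps f).take k).count U
      = (Finset.univ.filter fun i : Fin m => i.1 < k ∧ f i = true).card :=
  count_take_toSteps f true k

lemma count_D_take (f : Fin m → Bool) (k : ℕ) :
    ((toSteps f).take k).count D
      = (Finset.univ.filter fun i : Fin m => i.1 < k ∧ f i = false).card :=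
  count_take_toSteps f false k

lemma count_steps (l : List DyckStep) : l.count U + l.count D = l.length := by
  induction l with
  | nil => simp
  | cons s t ih => cases s <;> simp [List.count_cons] <;> omega

lemma card_true_eq_count (f : Fin m → Bool) :
    (Finset.univ.filter fun i : Fin m => f i = true).card = (toSteps f).count U := by
  have h := count_U_take f m
  rw [List.take_of_length_le (by simp)] at h
  rw [h]
  congr 1
  apply Finset.filter_congr
  intro i _
  have := i.2
  constructor
  · intro hb; exact ⟨this, hb⟩
  · rintro ⟨-, hb⟩; exact hb

def wordOf (n : ℕ) (f : Fin (2 * n) → Bool)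
    (h1 : (Finset.univ.filter fun i : Fin (2 * n) => f i = true).card = n)
    (h2 : ∀ k ≤ 2 * n,
      (Finset.univ.filter fun i : Fin (2 * n) => i.1 < k ∧ f i = false).card ≤
      (Finset.univ.filter fun i : Fin (2 * n) => i.1 < k ∧ f i = true).card) : DyckWord where
  toList := toSteps f
  count_U_eq_count_D := by
    have hU : (toSteps f).count U = n := by rw [← card_true_eq_count, h1]
    have hL := count_steps (toSteps f)
    rw [length_toSteps] at hL
    omega
  count_D_le_count_U i := by
    rcases le_or_gt i (2 * n) with h | h
    · rw [count_U_take, count_D_take]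
      exact h2 i h
    · rw [List.take_of_length_le (by simp; omega)]
      have hU : (toSteps f).count U = n := by rw [← card_true_eq_count, h1]
      have hL := count_steps (toSteps f)
      rw [length_toSteps] at hL
      omega

lemma semilength_wordOf (n f h1 h2) : (wordOf n f h1 h2).semilength = n := by
  show (toSteps f).count U = n
  rw [← card_true_eq_count, h1]

lemma sum_eq_totalArea (n : ℕ) :
    ∑ f ∈ Finset.univ.filter (fun f : Fin (2 * n) → Bool =>
        ((Finset.univ.filter fun i : Fin (2 * n) => f i = true).card = n) ∧
        (∀ k ≤ 2 * n,
          (Finset.univ.filter fun i : Fin (2 * n) => i.1 < k ∧ f i = false).card ≤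
          (Finset.univ.filter fun i : Fin (2 * n) => i.1 < k ∧ f i = true).card)),
      (∑ k ∈ Finset.range (2 * n + 1),
        ((Finset.univ.filter fun i : Fin (2 * n) => i.1 < k ∧ f i = true).card -
         (Finset.univ.filter fun i : Fin (2 * n) => i.1 < k ∧ f i = false).card)) =
    ∑ p : {p : DyckWord // p.semilength = n}, listArea p.1.toList := by
  apply Finset.sum_bij (i := fun f hf =>
    (⟨wordOf n f ((Finset.mem_filter.mp hf).2).1 ((Finset.mem_filter.mp hf).2).2,
      semilength_wordOf n f _ _⟩ : {p : DyckWord // p.semilength = n}))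
  · intro a ha; exact Finset.mem_univ _
  · intro a ha a' ha' hgg
    have : toSteps a = toSteps a' := congrArg (fun q => q.1.toList) hgg
    have := List.ofFn_injective this
    funext i
    have hi := congrFun this i
    by_cases h : a i <;> by_cases h' : a' i <;> simp_all
  · rintro ⟨p, hp⟩ -
    have hlen : p.toList.length = 2 * n := by rw [← p.two_mul_semilength_eq_length, hp]
    have hts : toSteps (fun i : Fin (2 * n) => p.toList[i.1]'(by omega) == U) = p.toList := by
      apply List.ext_getElem (by simp [hlen])
      intro j hj1 hj2
      simp only [toSteps, List.getElem_ofFn]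
      rcases (p.toList[j]'hj2).dichotomy with hx | hx <;> simp [hx]
    refine ⟨fun i => p.toList[i.1]'(by omega) == U, ?_, ?_⟩
    · rw [Finset.mem_filter]
      refine ⟨Finset.mem_univ _, ?_, ?_⟩
      · rw [card_true_eq_count, hts]
        exact hp
      · intro k hk
        rw [← count_U_take, ← count_D_take, hts]
        exact p.count_D_le_count_U k
    · apply Subtype.ext
      apply DyckWord.ext
      exact hts
  · intro f hf
    show _ = listArea (toSteps f)
    rw [listArea, length_toSteps]
    exact Finset.sum_congr rfl fun k _ => by rw [count_U_take, count_D_take]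

lemma totalArea_eq_B (n : ℕ) : totalArea n = B n := by
  induction n using Nat.strong_induction_on with
  | _ n ih =>
    match n with
    | 0 => rw [totalArea_zero]; rfl
    | n + 1 =>
      rw [totalArea_succ, B_conv]
      apply Finset.sum_congr rfl
      intro i hi
      have hi' : i ≤ n := Nat.lt_succ_iff.mp (Finset.mem_range.mp hi)
      rw [ih i (by omega), ih (n - i) (by omega)]

end AreaProof

/-- Total area under all Dyck paths of semilength `n` equals
`4^n - C(2n+1, n)`.  A Dyck path is encoded as `f : Fin (2n) → Bool`
(`true` = up-step, `false` = down-step) with exactly `n` up-steps and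
every prefix having at least as many up-steps as down-steps.  The area
statistic (as in OEIS A008549) is the sum, over all abscissas
`k = 0, …, 2n`, of the height of the path at `k`. -/
theorem total_area_under_dyck_paths (n : ℕ) :
    ∑ f ∈ Finset.univ.filter (fun f : Fin (2 * n) → Bool =>
        ((Finset.univ.filter fun i : Fin (2 * n) => f i = true).card = n) ∧
        (∀ k ≤ 2 * n,
          (Finset.univ.filter fun i : Fin (2 * n) => i.1 < k ∧ f i = false).card ≤
          (Finset.univ.filter fun i : Fin (2 * n) => i.1 < k ∧ f i = true).card)),
      (∑ k ∈ Finset.range (2 * n + 1),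
        ((Finset.univ.filter fun i : Fin (2 * n) => i.1 < k ∧ f i = true).card -
         (Finset.univ.filter fun i : Fin (2 * n) => i.1 < k ∧ f i = false).card)) =
    4 ^ n - (2 * n + 1).choose n := by
  rw [AreaProof.sum_eq_totalArea n]
  show AreaProof.totalArea n = _
  rw [AreaProof.totalArea_eq_B, AreaProof.B_eq]
end
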